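/- For all u₁,…,u_{m+1} > 0 and v₁,…,v_h > 0 one has the identity ∑_{i=1}^{m+1} (log u_i)·f_i + ∑_{j=1}^{h} (log v_j)·g_j = −(A−B)·log(A/B) − (B−C)·log(B/C), and in particular ∑_{i=1}^{m+1} (log u_i)·f_i + ∑_{j=1}^{h} (log v_j)·g_j ≤ 0. -/

import Mathlib

open Finset

lemma aux_neg_sub_log (x y : ℝ) (hx : 0 < x) (hy : 0 < y) :
    -(x - y) * Real.log (x / y) ≤ 0 := by
  rcases le_total x y with hxy | hxy
  · have h1 : Real.log (x / y) ≤ 0 :=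
      Real.log_nonpos (by positivity) (by rw [div_le_one hy]; exact hxy)
    have h2 : 0 ≤ -(x - y) := by linarith
    exact mul_nonpos_of_nonneg_of_nonpos h2 h1
  · have h1 : 0 ≤ Real.log (x / y) := Real.log_nonneg ((one_le_div hy).mpr hxy)
    have h2 : -(x - y) ≤ 0 := by linarith
    exact mul_nonpos_of_nonpos_of_nonneg h2 h1

/-- **Entropy dissipation for the network of Example 4.2.** With
`A = u₁⋯u_m u_{m+1}^k`, `B = u_m u_{m+1}`, `C = u_m^ℓ v₁⋯v_h`, and mass-action
nonlinearities `f_i = B - A` (`i = 1,…,m-1`), `f_m = (ℓ-1)(B - C)`,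
`f_{m+1} = -(k-1)A + (k-2)B + C`, `g_j = B - C` (`j = 1,…,h`), one has
`∑ log(u_i) f_i + ∑ log(v_j) g_j = -(A-B) log(A/B) - (B-C) log(B/C) ≤ 0`. -/
theorem S2_entropy_dissipation (m h k l : ℕ)
    (hm : 1 ≤ m) (hh : 1 ≤ h) (hk : 2 ≤ k) (hl : 2 ≤ l)
    (u v : ℕ → ℝ)
    (hu : ∀ i ∈ Finset.Icc 1 (m + 1), 0 < u i)
    (hv : ∀ j ∈ Finset.Icc 1 h, 0 < v j)
    (A B C : ℝ)
    (hA : A = (∏ i ∈ Finset.Icc 1 m, u i) * u (m + 1) ^ k)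
    (hB : B = u m * u (m + 1))
    (hC : C = u m ^ l * ∏ j ∈ Finset.Icc 1 h, v j)
    (f g : ℕ → ℝ)
    (hfi : ∀ i ∈ Finset.Icc 1 (m - 1), f i = B - A)
    (hfm : f m = ((l : ℝ) - 1) * (B - C))
    (hfm1 : f (m + 1) = -((k : ℝ) - 1) * A + ((k : ℝ) - 2) * B + C)
    (hg : ∀ j ∈ Finset.Icc 1 h, g j = B - C) :
    (∑ i ∈ Finset.Icc 1 (m + 1), Real.log (u i) * f i)
        + ∑ j ∈ Finset.Icc 1 h, Real.log (v j) * g j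
      = -(A - B) * Real.log (A / B) - (B - C) * Real.log (B / C) ∧
    (∑ i ∈ Finset.Icc 1 (m + 1), Real.log (u i) * f i)
        + ∑ j ∈ Finset.Icc 1 h, Real.log (v j) * g j ≤ 0 := by
  obtain ⟨n, rfl⟩ : ∃ n, m = n + 1 := ⟨m - 1, (Nat.succ_pred_eq_of_pos hm).symm⟩
  -- positivity facts
  have hu1 : ∀ i ∈ Finset.Icc 1 (n + 1), 0 < u i := fun i hi => by
    apply hu; simp only [Finset.mem_Icc] at hi ⊢; omega
  have hun1 : 0 < u (n + 1) := hu1 _ (by simp)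
  have hun2 : 0 < u (n + 1 + 1) := hu _ (by simp [Finset.mem_Icc])
  have hPu : 0 < ∏ i ∈ Finset.Icc 1 (n + 1), u i := Finset.prod_pos hu1
  have hPv : 0 < ∏ j ∈ Finset.Icc 1 h, v j := Finset.prod_pos hv
  have hApos : 0 < A := by rw [hA]; positivity
  have hBpos : 0 < B := by rw [hB]; positivity
  have hCpos : 0 < C := by rw [hC]; positivity
  -- logs
  have hlogA : Real.log A =
      (∑ i ∈ Finset.Icc 1 n, Real.log (u i)) + Real.log (u (n + 1))
        + (k : ℝ) * Real.log (u (n + 1 + 1)) := by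
    rw [hA, Real.log_mul (ne_of_gt hPu) (by positivity), Real.log_pow,
      Real.log_prod (fun i hi => (hu1 i hi).ne'),
      Finset.sum_Icc_succ_top (by omega : 1 ≤ n + 1)]
  have hlogB : Real.log B = Real.log (u (n + 1)) + Real.log (u (n + 1 + 1)) := by
    rw [hB, Real.log_mul hun1.ne' hun2.ne']
  have hlogC : Real.log C =
      (l : ℝ) * Real.log (u (n + 1)) + ∑ j ∈ Finset.Icc 1 h, Real.log (v j) := by
    rw [hC, Real.log_mul (by positivity) hPv.ne', Real.log_pow,
      Real.log_prod (fun j hj => (hv j hj).ne')]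
  have key : (∑ i ∈ Finset.Icc 1 (n + 1 + 1), Real.log (u i) * f i)
        + ∑ j ∈ Finset.Icc 1 h, Real.log (v j) * g j
      = -(A - B) * Real.log (A / B) - (B - C) * Real.log (B / C) := by
    rw [Real.log_div hApos.ne' hBpos.ne', Real.log_div hBpos.ne' hCpos.ne',
      hlogA, hlogB, hlogC,
      Finset.sum_Icc_succ_top (by omega : 1 ≤ n + 1 + 1),
      Finset.sum_Icc_succ_top (by omega : 1 ≤ n + 1), hfm, hfm1]
    have h1 : ∑ i ∈ Finset.Icc 1 n, Real.log (u i) * f i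
        = (∑ i ∈ Finset.Icc 1 n, Real.log (u i)) * (B - A) := by
      rw [Finset.sum_mul]
      exact Finset.sum_congr rfl fun i hi => by
        rw [hfi i (by simpa using hi)]
    have h2 : ∑ j ∈ Finset.Icc 1 h, Real.log (v j) * g j
        = (∑ j ∈ Finset.Icc 1 h, Real.log (v j)) * (B - C) := by
      rw [Finset.sum_mul]
      exact Finset.sum_congr rfl fun j hj => by rw [hg j hj]
    rw [h1, h2]
    ring
  refine ⟨key, ?_⟩
  rw [key]
  have t1 := aux_neg_sub_log A B hApos hBpos
  have t2 := aux_neg_sub_log B C hBpos hCpos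
  linarith
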